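/- In the group presented by generators s, t, u and relations stst = tsts, susu = usus, tutu = utut, stustus = tustust, and tustust = ustustu, the element (stu)^7 is central. -/

import Mathlib

set_option maxHeartbeats 1600000 in
/-- In the group ⟨s,t,u | stst=tsts, susu=usus, tutu=utut,
stustus=tustust=ustustu⟩ (the braid group of G₂₄), the element (stu)^7 is
central, i.e. it commutes with each generator. -/
theorem G24_center (G : Type*) [Group G] (s t u : G)
    (h1 : s*t*s*t = t*s*t*s)
    (h2 : s*u*s*u = u*s*u*s)
    (h3 : t*u*t*u = u*t*u*t)
    (h4 : s*t*u*s*t*u*s = t*u*s*t*u*s*t)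
    (h5 : t*u*s*t*u*s*t = u*s*t*u*s*t*u) :
    Commute ((s*t*u)^7) s ∧ Commute ((s*t*u)^7) t ∧ Commute ((s*t*u)^7) u := by
  -- conjugation by (stu)^2 sends s ↦ u
  have cA : ((s*t*u)*(s*t*u))*s*((s*t*u)*(s*t*u))⁻¹ = u := by
    calc ((s*t*u)*(s*t*u))*s*((s*t*u)*(s*t*u))⁻¹
        = (s*t*u*s*t*u*s) * ((s*t*u)*(s*t*u))⁻¹ := by group
      _ = (u*s*t*u*s*t*u) * ((s*t*u)*(s*t*u))⁻¹ := by rw [h4, h5]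
      _ = u := by group
  -- key auxiliary identity: s·(stustus) = (stustus)·t
  have E : s*(t*u*s*t*u*s*t) = (s*t*u*s*t*u*s)*t := by group
  rw [← h4] at E
  -- conjugation by (stu)^2 sends t ↦ u⁻¹su
  have cB : ((s*t*u)*(s*t*u))*t*((s*t*u)*(s*t*u))⁻¹ = u⁻¹*s*u := by
    calc ((s*t*u)*(s*t*u))*t*((s*t*u)*(s*t*u))⁻¹
        = ((s*t*u)*(s*t*u)) * ((s*t*u*s*t*u*s)⁻¹ * ((s*t*u*s*t*u*s)*t)) * ((s*t*u)*(s*t*u))⁻¹ := by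
          group
      _ = ((s*t*u)*(s*t*u)) * ((s*t*u*s*t*u*s)⁻¹ * (s*(s*t*u*s*t*u*s))) * ((s*t*u)*(s*t*u))⁻¹ := by
          rw [← E]
      _ = (((s*t*u)*(s*t*u))*s*((s*t*u)*(s*t*u))⁻¹)⁻¹ * s * (((s*t*u)*(s*t*u))*s*((s*t*u)*(s*t*u))⁻¹) := by
          group
      _ = u⁻¹*s*u := by rw [cA]
  -- conjugation by (stu)^2 sends u ↦ u⁻¹tu
  have cC : ((s*t*u)*(s*t*u))*u*((s*t*u)*(s*t*u))⁻¹ = u⁻¹*t*u := by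
    calc ((s*t*u)*(s*t*u))*u*((s*t*u)*(s*t*u))⁻¹
        = (((s*t*u)*(s*t*u))*t*((s*t*u)*(s*t*u))⁻¹)⁻¹ * (((s*t*u)*(s*t*u))*s*((s*t*u)*(s*t*u))⁻¹)⁻¹ * (s*t*u) := by
          group
      _ = (u⁻¹*s*u)⁻¹ * u⁻¹ * (s*t*u) := by rw [cA, cB]
      _ = u⁻¹*t*u := by group
  -- sixth power conjugations
  have c6s : (((s*t*u)*(s*t*u))*((s*t*u)*(s*t*u))*((s*t*u)*(s*t*u)))*s*(((s*t*u)*(s*t*u))*((s*t*u)*(s*t*u))*((s*t*u)*(s*t*u)))⁻¹ = (s*t*u)⁻¹*s*(s*t*u) := by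
    calc (((s*t*u)*(s*t*u))*((s*t*u)*(s*t*u))*((s*t*u)*(s*t*u)))*s*(((s*t*u)*(s*t*u))*((s*t*u)*(s*t*u))*((s*t*u)*(s*t*u)))⁻¹
        = ((s*t*u)*(s*t*u))*(((s*t*u)*(s*t*u))*(((s*t*u)*(s*t*u))*s*((s*t*u)*(s*t*u))⁻¹)*((s*t*u)*(s*t*u))⁻¹)*((s*t*u)*(s*t*u))⁻¹ := by
          group
      _ = ((s*t*u)*(s*t*u))*(((s*t*u)*(s*t*u))*u*((s*t*u)*(s*t*u))⁻¹)*((s*t*u)*(s*t*u))⁻¹ := by rw [cA]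
      _ = ((s*t*u)*(s*t*u))*(u⁻¹*t*u)*((s*t*u)*(s*t*u))⁻¹ := by rw [cC]
      _ = (((s*t*u)*(s*t*u))*u*((s*t*u)*(s*t*u))⁻¹)⁻¹ * (((s*t*u)*(s*t*u))*t*((s*t*u)*(s*t*u))⁻¹) * (((s*t*u)*(s*t*u))*u*((s*t*u)*(s*t*u))⁻¹) := by
          group
      _ = (u⁻¹*t*u)⁻¹ * (u⁻¹*s*u) * (u⁻¹*t*u) := by rw [cB, cC]
      _ = (s*t*u)⁻¹*s*(s*t*u) := by group
  have c6t : (((s*t*u)*(s*t*u))*((s*t*u)*(s*t*u))*((s*t*u)*(s*t*u)))*t*(((s*t*u)*(s*t*u))*((s*t*u)*(s*t*u))*((s*t*u)*(s*t*u)))⁻¹ = (s*t*u)⁻¹*t*(s*t*u) := by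
    calc (((s*t*u)*(s*t*u))*((s*t*u)*(s*t*u))*((s*t*u)*(s*t*u)))*t*(((s*t*u)*(s*t*u))*((s*t*u)*(s*t*u))*((s*t*u)*(s*t*u)))⁻¹
        = ((s*t*u)*(s*t*u))*(((s*t*u)*(s*t*u))*(((s*t*u)*(s*t*u))*t*((s*t*u)*(s*t*u))⁻¹)*((s*t*u)*(s*t*u))⁻¹)*((s*t*u)*(s*t*u))⁻¹ := by
          group
      _ = ((s*t*u)*(s*t*u))*(((s*t*u)*(s*t*u))*(u⁻¹*s*u)*((s*t*u)*(s*t*u))⁻¹)*((s*t*u)*(s*t*u))⁻¹ := by rw [cB]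
      _ = ((s*t*u)*(s*t*u))*((((s*t*u)*(s*t*u))*u*((s*t*u)*(s*t*u))⁻¹)⁻¹*(((s*t*u)*(s*t*u))*s*((s*t*u)*(s*t*u))⁻¹)*(((s*t*u)*(s*t*u))*u*((s*t*u)*(s*t*u))⁻¹))*((s*t*u)*(s*t*u))⁻¹ := by
          group
      _ = ((s*t*u)*(s*t*u))*((u⁻¹*t*u)⁻¹*u*(u⁻¹*t*u))*((s*t*u)*(s*t*u))⁻¹ := by rw [cA, cC]
      _ = (((s*t*u)*(s*t*u))*u*((s*t*u)*(s*t*u))⁻¹)⁻¹*(((s*t*u)*(s*t*u))*t*((s*t*u)*(s*t*u))⁻¹)⁻¹*(((s*t*u)*(s*t*u))*u*((s*t*u)*(s*t*u))⁻¹)*(((s*t*u)*(s*t*u))*t*((s*t*u)*(s*t*u))⁻¹)*(((s*t*u)*(s*t*u))*u*((s*t*u)*(s*t*u))⁻¹) := by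
          group
      _ = (u⁻¹*t*u)⁻¹*(u⁻¹*s*u)⁻¹*(u⁻¹*t*u)*(u⁻¹*s*u)*(u⁻¹*t*u) := by rw [cB, cC]
      _ = (s*t*u)⁻¹*t*(s*t*u) := by group
  have c6u : (((s*t*u)*(s*t*u))*((s*t*u)*(s*t*u))*((s*t*u)*(s*t*u)))*u*(((s*t*u)*(s*t*u))*((s*t*u)*(s*t*u))*((s*t*u)*(s*t*u)))⁻¹ = (s*t*u)⁻¹*u*(s*t*u) := by
    calc (((s*t*u)*(s*t*u))*((s*t*u)*(s*t*u))*((s*t*u)*(s*t*u)))*u*(((s*t*u)*(s*t*u))*((s*t*u)*(s*t*u))*((s*t*u)*(s*t*u)))⁻¹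
        = ((s*t*u)*(s*t*u))*(((s*t*u)*(s*t*u))*(((s*t*u)*(s*t*u))*u*((s*t*u)*(s*t*u))⁻¹)*((s*t*u)*(s*t*u))⁻¹)*((s*t*u)*(s*t*u))⁻¹ := by
          group
      _ = ((s*t*u)*(s*t*u))*(((s*t*u)*(s*t*u))*(u⁻¹*t*u)*((s*t*u)*(s*t*u))⁻¹)*((s*t*u)*(s*t*u))⁻¹ := by rw [cC]
      _ = ((s*t*u)*(s*t*u))*((((s*t*u)*(s*t*u))*u*((s*t*u)*(s*t*u))⁻¹)⁻¹*(((s*t*u)*(s*t*u))*t*((s*t*u)*(s*t*u))⁻¹)*(((s*t*u)*(s*t*u))*u*((s*t*u)*(s*t*u))⁻¹))*((s*t*u)*(s*t*u))⁻¹ := by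
          group
      _ = ((s*t*u)*(s*t*u))*((u⁻¹*t*u)⁻¹*(u⁻¹*s*u)*(u⁻¹*t*u))*((s*t*u)*(s*t*u))⁻¹ := by rw [cB, cC]
      _ = (((s*t*u)*(s*t*u))*u*((s*t*u)*(s*t*u))⁻¹)⁻¹*(((s*t*u)*(s*t*u))*t*((s*t*u)*(s*t*u))⁻¹)⁻¹*(((s*t*u)*(s*t*u))*s*((s*t*u)*(s*t*u))⁻¹)*(((s*t*u)*(s*t*u))*t*((s*t*u)*(s*t*u))⁻¹)*(((s*t*u)*(s*t*u))*u*((s*t*u)*(s*t*u))⁻¹) := by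
          group
      _ = (u⁻¹*t*u)⁻¹*(u⁻¹*s*u)⁻¹*u*(u⁻¹*s*u)*(u⁻¹*t*u) := by rw [cA, cB, cC]
      _ = (s*t*u)⁻¹*u*(s*t*u) := by group
  -- conclude: (stu)^7 x (stu)^{-7} = x
  have p7 : (s*t*u)^7 = (s*t*u)*(((s*t*u)*(s*t*u))*((s*t*u)*(s*t*u))*((s*t*u)*(s*t*u))) := by
    rw [show (7:ℕ) = 1+(2+2+2) by norm_num, pow_add, pow_add, pow_add, pow_one, sq]
  have c7s : (s*t*u)^7*s = s*(s*t*u)^7 := by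
    rw [p7]
    have : ((s*t*u)*(((s*t*u)*(s*t*u))*((s*t*u)*(s*t*u))*((s*t*u)*(s*t*u))))*s*((s*t*u)*(((s*t*u)*(s*t*u))*((s*t*u)*(s*t*u))*((s*t*u)*(s*t*u))))⁻¹ = s := by
      calc ((s*t*u)*(((s*t*u)*(s*t*u))*((s*t*u)*(s*t*u))*((s*t*u)*(s*t*u))))*s*((s*t*u)*(((s*t*u)*(s*t*u))*((s*t*u)*(s*t*u))*((s*t*u)*(s*t*u))))⁻¹
          = (s*t*u)*((((s*t*u)*(s*t*u))*((s*t*u)*(s*t*u))*((s*t*u)*(s*t*u)))*s*(((s*t*u)*(s*t*u))*((s*t*u)*(s*t*u))*((s*t*u)*(s*t*u)))⁻¹)*(s*t*u)⁻¹ := by group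
        _ = (s*t*u)*((s*t*u)⁻¹*s*(s*t*u))*(s*t*u)⁻¹ := by rw [c6s]
        _ = s := by group
    exact mul_inv_eq_iff_eq_mul.mp this
  have c7t : (s*t*u)^7*t = t*(s*t*u)^7 := by
    rw [p7]
    have : ((s*t*u)*(((s*t*u)*(s*t*u))*((s*t*u)*(s*t*u))*((s*t*u)*(s*t*u))))*t*((s*t*u)*(((s*t*u)*(s*t*u))*((s*t*u)*(s*t*u))*((s*t*u)*(s*t*u))))⁻¹ = t := by
      calc ((s*t*u)*(((s*t*u)*(s*t*u))*((s*t*u)*(s*t*u))*((s*t*u)*(s*t*u))))*t*((s*t*u)*(((s*t*u)*(s*t*u))*((s*t*u)*(s*t*u))*((s*t*u)*(s*t*u))))⁻¹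
          = (s*t*u)*((((s*t*u)*(s*t*u))*((s*t*u)*(s*t*u))*((s*t*u)*(s*t*u)))*t*(((s*t*u)*(s*t*u))*((s*t*u)*(s*t*u))*((s*t*u)*(s*t*u)))⁻¹)*(s*t*u)⁻¹ := by group
        _ = (s*t*u)*((s*t*u)⁻¹*t*(s*t*u))*(s*t*u)⁻¹ := by rw [c6t]
        _ = t := by group
    exact mul_inv_eq_iff_eq_mul.mp this
  have c7u : (s*t*u)^7*u = u*(s*t*u)^7 := by
    rw [p7]
    have : ((s*t*u)*(((s*t*u)*(s*t*u))*((s*t*u)*(s*t*u))*((s*t*u)*(s*t*u))))*u*((s*t*u)*(((s*t*u)*(s*t*u))*((s*t*u)*(s*t*u))*((s*t*u)*(s*t*u))))⁻¹ = u := by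
      calc ((s*t*u)*(((s*t*u)*(s*t*u))*((s*t*u)*(s*t*u))*((s*t*u)*(s*t*u))))*u*((s*t*u)*(((s*t*u)*(s*t*u))*((s*t*u)*(s*t*u))*((s*t*u)*(s*t*u))))⁻¹
          = (s*t*u)*((((s*t*u)*(s*t*u))*((s*t*u)*(s*t*u))*((s*t*u)*(s*t*u)))*u*(((s*t*u)*(s*t*u))*((s*t*u)*(s*t*u))*((s*t*u)*(s*t*u)))⁻¹)*(s*t*u)⁻¹ := by group
        _ = (s*t*u)*((s*t*u)⁻¹*u*(s*t*u))*(s*t*u)⁻¹ := by rw [c6u]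
        _ = u := by group
    exact mul_inv_eq_iff_eq_mul.mp this
  exact ⟨c7s, c7t, c7u⟩
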